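/- Let G be a bipartite simple graph with exactly 4k edges, k ≥ 1. Then the following are equivalent: (i) there is a partition of the edge set of G into k blocks of 4 edges each whose total cost (the sum over blocks of the number of vertices incident to the edges of the block) is at most 4k; (ii) there is a partition of the edge set of G into k blocks, each of which forms a 4-cycle, i.e., each block equals {s(a,b), s(b,c), s(c,d), s(d,a)} for some four pairwise distinct vertices a, b, c, d. (This equivalence is the correctness of the reduction from edge partition into C4's, which establishes NP-hardness of PQ(#1=2, distinct, connected).) -/

import Mathlib

open Finset

/-- The number of vertices incident to at least one edge of a block `b` of edges. -/
def edgeBlockCost {V : Type*} [Fintype V] [DecidableEq V] (b : Finset (Sym2 V)) : ℕ :=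
  (univ.filter fun x : V => ∃ e ∈ b, x ∈ e).card

section Aux

variable {V : Type*} [Fintype V] [DecidableEq V]

lemma cyc_card {a c d e : V} (h1 : a ≠ c) (h2 : a ≠ d) (h3 : a ≠ e) (h4 : c ≠ d)
    (h5 : c ≠ e) (h6 : d ≠ e) :
    ({s(a,c), s(c,d), s(d,e), s(e,a)} : Finset (Sym2 V)).card = 4 := by
  rw [card_insert_of_notMem, card_insert_of_notMem, card_insert_of_notMem,
    card_singleton] <;> simp [Sym2.eq_iff] <;> tauto

lemma cyc_cost {a c d e : V} (h1 : a ≠ c) (h2 : a ≠ d) (h3 : a ≠ e) (h4 : c ≠ d)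
    (h5 : c ≠ e) (h6 : d ≠ e) :
    edgeBlockCost ({s(a,c), s(c,d), s(d,e), s(e,a)} : Finset (Sym2 V)) = 4 := by
  have hS : (univ.filter fun x : V =>
      ∃ e' ∈ ({s(a,c), s(c,d), s(d,e), s(e,a)} : Finset (Sym2 V)), x ∈ e') =
      {a, c, d, e} := by
    ext x
    simp [Sym2.mem_iff]
    tauto
  rw [edgeBlockCost, hS]
  rw [card_insert_of_notMem, card_insert_of_notMem, card_insert_of_notMem,
    card_singleton] <;> simp <;> tauto

lemma four_le_cost (b : Finset (Sym2 V)) (hd : ∀ e ∈ b, ¬ e.IsDiag)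
    (h4 : b.card = 4) : 4 ≤ edgeBlockCost b := by
  classical
  set S := univ.filter fun x : V => ∃ e ∈ b, x ∈ e with hS
  have hmem : ∀ {e : Sym2 V} {x : V}, e ∈ b → x ∈ e → x ∈ S := by
    intro e x he hx
    simp only [hS, mem_filter, mem_univ, true_and]
    exact ⟨e, he, hx⟩
  have key : b.card ≤ (S.powersetCard 2).card := by
    apply Finset.card_le_card_of_injOn (fun e => S.filter (· ∈ e))
    · intro e he
      simp only [Finset.mem_coe, Finset.mem_powersetCard]
      refine ⟨Finset.filter_subset _ _, ?_⟩
      induction e using Sym2.ind with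
      | _ x y =>
        have hxy : x ≠ y := by simpa using hd _ he
        have : S.filter (· ∈ s(x,y)) = {x, y} := by
          ext z
          simp only [mem_filter, Sym2.mem_iff, mem_insert, mem_singleton]
          constructor
          · tauto
          · rintro (rfl | rfl)
            · exact ⟨hmem he (by simp), Or.inl rfl⟩
            · exact ⟨hmem he (by simp), Or.inr rfl⟩
        rw [this, card_insert_of_notMem (by simpa using hxy), card_singleton]
    · intro e he e' he' h
      have h' : S.filter (· ∈ e) = S.filter (· ∈ e') := h
      apply Sym2.ext
      intro z
      constructor
      · intro hz
        have : z ∈ S.filter (· ∈ e) := mem_filter.2 ⟨hmem (Finset.mem_coe.1 he) hz, hz⟩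
        rw [h'] at this
        exact (mem_filter.1 this).2
      · intro hz
        have : z ∈ S.filter (· ∈ e') := mem_filter.2 ⟨hmem (Finset.mem_coe.1 he') hz, hz⟩
        rw [← h'] at this
        exact (mem_filter.1 this).2
  rw [h4, Finset.card_powersetCard] at key
  have : edgeBlockCost b = S.card := rfl
  rw [this]
  by_contra hlt
  push_neg at hlt
  have : S.card.choose 2 ≤ (3).choose 2 := Nat.choose_le_choose 2 (by omega)
  simp [Nat.choose] at this
  omega

lemma block_is_C4 {G : SimpleGraph V} [DecidableRel G.Adj]
    (C : G.Coloring (Fin 2)) {b : Finset (Sym2 V)} (hsub : b ⊆ G.edgeFinset)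
    (h4 : b.card = 4) (hc : edgeBlockCost b ≤ 4) :
    ∃ a c d e : V, a ≠ c ∧ a ≠ d ∧ a ≠ e ∧ c ≠ d ∧ c ≠ e ∧ d ≠ e ∧
      b = {s(a, c), s(c, d), s(d, e), s(e, a)} := by
  classical
  set S := univ.filter fun x : V => ∃ e ∈ b, x ∈ e with hS
  have hmem : ∀ {e : Sym2 V} {x : V}, e ∈ b → x ∈ e → x ∈ S := by
    intro e x he hx
    simp only [hS, mem_filter, mem_univ, true_and]
    exact ⟨e, he, hx⟩
  have hd : ∀ e ∈ b, ¬ e.IsDiag := fun e he =>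
    G.not_isDiag_of_mem_edgeSet (SimpleGraph.mem_edgeFinset.1 (hsub he))
  have hS4 : S.card = 4 := le_antisymm hc (four_le_cost b hd h4)
  set A := S.filter fun x => C x = 0 with hA
  set B := S.filter fun x => C x = 1 with hB
  have hAB : A.card + B.card = 4 := by
    have hsplit := Finset.card_filter_add_card_filter_not
      (s := S) (p := fun x => C x = 0)
    have hBalt : B = S.filter (fun x => ¬ C x = 0) := by
      apply Finset.filter_congr
      intro x _
      constructor
      · intro h; rw [h]; decide
      · intro h; exact (by decide : ∀ t : Fin 2, ¬ t = 0 → t = 1) _ h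
    rw [hBalt, ← hS4]
    exact hsplit
  have hends : ∀ e ∈ b, ∃ x y : V, e = s(x,y) ∧ x ∈ A ∧ y ∈ B ∧
      A.filter (· ∈ e) = {x} ∧ B.filter (· ∈ e) = {y} := by
    intro e he
    induction e using Sym2.ind with
    | _ x y =>
      have hadj : G.Adj x y := SimpleGraph.mem_edgeFinset.1 (hsub he)
      have hne : C x ≠ C y := C.valid hadj
      have hxS : x ∈ S := hmem he (by simp)
      have hyS : y ∈ S := hmem he (by simp)
      rcases (by decide : ∀ u v : Fin 2, u ≠ v → (u = 0 ∧ v = 1) ∨ (u = 1 ∧ v = 0))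
          _ _ hne with ⟨h0, h1⟩ | ⟨h0, h1⟩
      · refine ⟨x, y, rfl, mem_filter.2 ⟨hxS, h0⟩, mem_filter.2 ⟨hyS, h1⟩, ?_, ?_⟩
        · ext z
          simp only [hA, mem_filter, Sym2.mem_iff, mem_singleton, mem_univ, true_and]
          constructor
          · rintro ⟨⟨hzS, hz0⟩, (rfl | rfl)⟩
            · rfl
            · rw [h1] at hz0; exact absurd hz0 (by decide)
          · rintro rfl; exact ⟨⟨hxS, h0⟩, Or.inl rfl⟩
        · ext z
          simp only [hB, mem_filter, Sym2.mem_iff, mem_singleton, mem_univ, true_and]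
          constructor
          · rintro ⟨⟨hzS, hz1⟩, (rfl | rfl)⟩
            · rw [h0] at hz1; exact absurd hz1 (by decide)
            · rfl
          · rintro rfl; exact ⟨⟨hyS, h1⟩, Or.inr rfl⟩
      · refine ⟨y, x, Sym2.eq_swap.symm, mem_filter.2 ⟨hyS, h1⟩, mem_filter.2 ⟨hxS, h0⟩, ?_, ?_⟩
        · ext z
          simp only [hA, mem_filter, Sym2.mem_iff, mem_singleton, mem_univ, true_and]
          constructor
          · rintro ⟨⟨hzS, hz0⟩, (rfl | rfl)⟩
            · rw [h0] at hz0; exact absurd hz0 (by decide)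
            · rfl
          · rintro rfl; exact ⟨⟨hyS, h1⟩, Or.inr rfl⟩
        · ext z
          simp only [hB, mem_filter, Sym2.mem_iff, mem_singleton, mem_univ, true_and]
          constructor
          · rintro ⟨⟨hzS, hz1⟩, (rfl | rfl)⟩
            · rfl
            · rw [h1] at hz1; exact absurd hz1 (by decide)
          · rintro rfl; exact ⟨⟨hxS, h0⟩, Or.inl rfl⟩
  have key : b.card ≤ (A.powersetCard 1 ×ˢ B.powersetCard 1).card := by
    apply Finset.card_le_card_of_injOn
      (fun e => (A.filter (· ∈ e), B.filter (· ∈ e)))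
    · intro e he
      obtain ⟨x, y, hxy, hxA, hyB, hfa, hfb⟩ := hends e he
      simp only [Finset.mem_coe, Finset.mem_product]
      constructor
      · rw [Finset.mem_powersetCard]
        exact ⟨by rw [hfa]; simpa using hxA, by rw [hfa]; simp⟩
      · rw [Finset.mem_powersetCard]
        exact ⟨by rw [hfb]; simpa using hyB, by rw [hfb]; simp⟩
    · intro e he e' he' h
      obtain ⟨x, y, hxy, hxA, hyB, hfa, hfb⟩ := hends e (Finset.mem_coe.1 he)
      obtain ⟨x', y', hxy', hxA', hyB', hfa', hfb'⟩ := hends e' (Finset.mem_coe.1 he')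
      have h1 : A.filter (· ∈ e) = A.filter (· ∈ e') := congrArg Prod.fst h
      have h2 : B.filter (· ∈ e) = B.filter (· ∈ e') := congrArg Prod.snd h
      rw [hfa, hfa'] at h1
      rw [hfb, hfb'] at h2
      rw [Finset.singleton_inj] at h1 h2
      rw [hxy, hxy', h1, h2]
  rw [h4, Finset.card_product, Finset.card_powersetCard, Finset.card_powersetCard,
    Nat.choose_one_right, Nat.choose_one_right] at key
  have hA2 : A.card = 2 ∧ B.card = 2 := by
    have h1 : A.card ≤ 4 := by omega
    interval_cases h : A.card <;> omega
  obtain ⟨a, d, had, hAeq⟩ := Finset.card_eq_two.1 hA2.1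
  obtain ⟨c, e, hce, hBeq⟩ := Finset.card_eq_two.1 hA2.2
  have hcol : ∀ x ∈ A, ∀ y ∈ B, x ≠ y := by
    rintro x hx y hy rfl
    have h1 := (mem_filter.1 hx).2
    have h2 := (mem_filter.1 hy).2
    rw [h1] at h2
    exact absurd h2 (by decide)
  have haA : a ∈ A := by rw [hAeq]; simp
  have hdA : d ∈ A := by rw [hAeq]; simp
  have hcB : c ∈ B := by rw [hBeq]; simp
  have heB : e ∈ B := by rw [hBeq]; simp
  refine ⟨a, c, d, e, hcol a haA c hcB, had, hcol a haA e heB,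
    (hcol d hdA c hcB).symm, hce, hcol d hdA e heB, ?_⟩
  apply Finset.eq_of_subset_of_card_le
  · intro f hf
    obtain ⟨x, y, hf2, hxA, hyB, -, -⟩ := hends f hf
    subst hf2
    rw [hAeq] at hxA
    rw [hBeq] at hyB
    simp only [mem_insert, mem_singleton] at hxA hyB ⊢
    rw [Sym2.eq_iff, Sym2.eq_iff, Sym2.eq_iff, Sym2.eq_iff]
    tauto
  · rw [cyc_card (hcol a haA c hcB) had (hcol a haA e heB)
      (hcol d hdA c hcB).symm hce (hcol d hdA e heB), h4]

end Aux

theorem edge_partition_C4_iff (k : ℕ) (hk : 1 ≤ k) {V : Type*} [Fintype V]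
    [DecidableEq V] (G : SimpleGraph V) [DecidableRel G.Adj]
    (hbip : G.Colorable 2) (hcard : G.edgeFinset.card = 4 * k) :
    (∃ P : Finpartition G.edgeFinset, (∀ b ∈ P.parts, b.card = 4) ∧
      ∑ b ∈ P.parts, edgeBlockCost b ≤ 4 * k) ↔
    (∃ P : Finpartition G.edgeFinset, ∀ b ∈ P.parts,
      ∃ a c d e : V, a ≠ c ∧ a ≠ d ∧ a ≠ e ∧ c ≠ d ∧ c ≠ e ∧ d ≠ e ∧
        b = {s(a, c), s(c, d), s(d, e), s(e, a)}) := by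
  obtain ⟨C⟩ := hbip
  constructor
  · rintro ⟨P, hcards, hcost⟩
    have hpc : P.parts.card = k := by
      have h1 : ∑ b ∈ P.parts, b.card = 4 * k := by rw [P.sum_card_parts, hcard]
      have h2 : ∑ b ∈ P.parts, b.card = P.parts.card * 4 :=
        Finset.sum_const_nat hcards
      omega
    have hsubs : ∀ b ∈ P.parts, b ⊆ G.edgeFinset := fun b hb => P.le hb
    have h4le : ∀ b ∈ P.parts, 4 ≤ edgeBlockCost b := fun b hb =>
      four_le_cost b (fun e he => G.not_isDiag_of_mem_edgeSet
        (SimpleGraph.mem_edgeFinset.1 (hsubs b hb he))) (hcards b hb)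
    have hsum : ∑ _b ∈ P.parts, (4:ℕ) ≤ ∑ b ∈ P.parts, edgeBlockCost b :=
      Finset.sum_le_sum h4le
    have h0 : ∑ _b ∈ P.parts, (4:ℕ) = 4 * k := by
      rw [Finset.sum_const, hpc, smul_eq_mul, Nat.mul_comm]
    have heqsum : ∑ _b ∈ P.parts, (4:ℕ) = ∑ b ∈ P.parts, edgeBlockCost b :=
      le_antisymm hsum (by omega)
    have heq : ∀ b ∈ P.parts, edgeBlockCost b = 4 := fun b hb =>
      ((Finset.sum_eq_sum_iff_of_le h4le).1 heqsum b hb).symm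
    exact ⟨P, fun b hb =>
      block_is_C4 C (hsubs b hb) (hcards b hb) (heq b hb).le⟩
  · rintro ⟨P, hP⟩
    have hcards : ∀ b ∈ P.parts, b.card = 4 := by
      intro b hb
      obtain ⟨a, c, d, e, h1, h2, h3, h4, h5, h6, rfl⟩ := hP b hb
      exact cyc_card h1 h2 h3 h4 h5 h6
    refine ⟨P, hcards, ?_⟩
    have hpc : P.parts.card = k := by
      have h1 : ∑ b ∈ P.parts, b.card = 4 * k := by rw [P.sum_card_parts, hcard]
      have h2 : ∑ b ∈ P.parts, b.card = P.parts.card * 4 :=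
        Finset.sum_const_nat hcards
      omega
    have : ∑ b ∈ P.parts, edgeBlockCost b = ∑ _b ∈ P.parts, (4:ℕ) := by
      apply Finset.sum_congr rfl
      intro b hb
      obtain ⟨a, c, d, e, h1, h2, h3, h4, h5, h6, rfl⟩ := hP b hb
      exact cyc_cost h1 h2 h3 h4 h5 h6
    rw [this, Finset.sum_const, hpc, smul_eq_mul, Nat.mul_comm]
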